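/- For every n ≥ 1, 8·pc(n)·(1 + (3/2)·α(n)·γ(n)) < I(n) < 8·pc(n)·(β(n) + (3/2)·γ(n)) (inequalities of real numbers). -/

import Mathlib

/-- One step of the recursion for the ice-model boundary counts
`(pa, pb, pc, pd)` on the Sierpinski gasket `SG(n)`. -/
def iceStep : ℕ × ℕ × ℕ × ℕ → ℕ × ℕ × ℕ × ℕ
  | (a, b, c, d) =>
    ((a + b) ^ 2 * (a + 3 * c + d),
     (a + b) ^ 2 * (b + 3 * c + d),
     a ^ 2 * b + b ^ 2 * a + (3 * c + d) ^ 3,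
     a ^ 3 + b ^ 3 + (3 * c + d) ^ 3)

/-- The quadruple `(pa(n), pb(n), pc(n), pd(n))`. -/
def iceSeq : ℕ → ℕ × ℕ × ℕ × ℕ
  | 0 => (0, 1, 0, 1)
  | n + 1 => iceStep (iceSeq n)

def pa (n : ℕ) : ℕ := (iceSeq n).1
def pb (n : ℕ) : ℕ := (iceSeq n).2.1
def pc (n : ℕ) : ℕ := (iceSeq n).2.2.1
def pd (n : ℕ) : ℕ := (iceSeq n).2.2.2

noncomputable def alphaSeq (n : ℕ) : ℝ := (pa n : ℝ) / (pb n : ℝ)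
noncomputable def betaSeq (n : ℕ) : ℝ := (pd n : ℝ) / (pc n : ℝ)
noncomputable def gammaSeq (n : ℕ) : ℝ := (pb n : ℝ) / (pc n : ℝ)

/-- The number of ice-model configurations on `SG(n)`. -/
def iceI (n : ℕ) : ℕ := 6 * pa n + 6 * pb n + 6 * pc n + 2 * pd n

/-- The number of vertices of `SG(n)` (the division is exact). -/
def vSG (n : ℕ) : ℕ := 3 * (3 ^ n + 1) / 2

lemma ice_key : ∀ n, pa n < pb n ∧ pc n ≤ pd n := by
  intro n
  induction n with
  | zero => simp [pa, pb, pc, pd, iceSeq]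
  | succ k ih =>
    obtain ⟨h1, h2⟩ := ih
    simp only [pa, pb, pc, pd, iceSeq, iceStep] at *
    set a := (iceSeq k).1
    set b := (iceSeq k).2.1
    set c := (iceSeq k).2.2.1
    set d := (iceSeq k).2.2.2
    constructor
    · have hs : 0 < (a + b) ^ 2 := Nat.pow_pos (by omega)
      exact Nat.mul_lt_mul_of_pos_left (by omega) hs
    · have h3 : a ^ 2 * b + b ^ 2 * a ≤ a ^ 3 + b ^ 3 := by
        zify
        nlinarith [sq_nonneg ((a : ℤ) - b)]
      omega

lemma ice_pos : ∀ n, 1 ≤ n → 0 < pa n ∧ 0 < pb n ∧ 0 < pc n ∧ 0 < pd n := by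
  intro n hn
  induction n with
  | zero => omega
  | succ k ih =>
    rcases Nat.eq_zero_or_pos k with h | h
    · subst h
      refine ⟨?_, ?_, ?_, ?_⟩ <;> decide
    · obtain ⟨ha, hb, hc, hd⟩ := ih h
      simp only [pa, pb, pc, pd, iceSeq, iceStep] at *
      refine ⟨?_, ?_, ?_, ?_⟩ <;> positivity

theorem stmt_11 (n : ℕ) (hn : 1 ≤ n) :
    8 * (pc n : ℝ) * (1 + 3 / 2 * alphaSeq n * gammaSeq n) < (iceI n : ℝ) ∧
    (iceI n : ℝ) < 8 * (pc n : ℝ) * (betaSeq n + 3 / 2 * gammaSeq n) := by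
  obtain ⟨ha, hb, hc, hd⟩ := ice_pos n hn
  obtain ⟨hab, hcd⟩ := ice_key n
  have hbR : (0:ℝ) < pb n := by exact_mod_cast hb
  have hcR : (0:ℝ) < pc n := by exact_mod_cast hc
  have habR : (pa n : ℝ) < pb n := by exact_mod_cast hab
  have hcdR : (pc n : ℝ) ≤ pd n := by exact_mod_cast hcd
  have hI : (iceI n : ℝ) = 6 * pa n + 6 * pb n + 6 * pc n + 2 * pd n := by
    simp only [iceI]; push_cast; ring
  unfold alphaSeq gammaSeq betaSeq
  rw [hI]
  constructor
  · have e : 8 * (pc n : ℝ) * (1 + 3 / 2 * ((pa n : ℝ) / (pb n : ℝ)) * ((pb n : ℝ) / (pc n : ℝ)))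
        = 8 * (pc n : ℝ) + 12 * (pa n : ℝ) := by
      field_simp
      ring
    rw [e]
    linarith
  · have e : 8 * (pc n : ℝ) * ((pd n : ℝ) / (pc n : ℝ) + 3 / 2 * ((pb n : ℝ) / (pc n : ℝ)))
        = 8 * (pd n : ℝ) + 12 * (pb n : ℝ) := by
      field_simp
      ring
    rw [e]
    linarith
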